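/- For all real x, ψ(x) = |x| + β(x²), where ψ(x) = x·E(x) + (1/(2π))E'(x) with E the Gauss error function, and β(t) = (1/(2π))∫₁^∞ u^{−3/2} e^{−πtu} du for t ≥ 0. -/

import Mathlib

open Real

section Helpers
open MeasureTheory Set Filter Topology

-- integrability of the gaussian tail
lemma hInt1 (a : ℝ) : IntegrableOn (fun s : ℝ => Real.exp (-π * s ^ 2)) (Set.Ioi a) :=
  (integrable_exp_neg_mul_sq pi_pos).integrableOn

-- integrability of exp(-πs²)/s² on Ioi a, a > 0
lemma hInt2 {a : ℝ} (ha : 0 < a) :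
    IntegrableOn (fun s : ℝ => Real.exp (-π * s ^ 2) / s ^ 2) (Set.Ioi a) := by
  refine Integrable.mono' ((hInt1 a).const_mul (a ^ 2)⁻¹) ?_ ?_
  · refine (ContinuousOn.div ?_ ?_ ?_).aestronglyMeasurable measurableSet_Ioi
    · exact Continuous.continuousOn (by continuity)
    · exact Continuous.continuousOn (by continuity)
    · intro s hs
      have : (0:ℝ) < s := ha.trans hs
      positivity
  · filter_upwards [ae_restrict_mem measurableSet_Ioi] with s hs
    have hs' : a < s := hs
    have h0 : (0:ℝ) < s := ha.trans hs'
    rw [Real.norm_eq_abs, abs_of_nonneg (by positivity), div_eq_mul_inv, mul_comm]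
    gcongr

-- integration by parts on the tail
lemma ibp {a : ℝ} (ha : 0 < a) :
    ∫ s in Set.Ioi a, Real.exp (-π * s ^ 2) / s ^ 2
      = Real.exp (-π * a ^ 2) / a - 2 * π * ∫ s in Set.Ioi a, Real.exp (-π * s ^ 2) := by
  have hderiv : ∀ s ∈ Set.Ici a, HasDerivAt (fun s : ℝ => -Real.exp (-π * s ^ 2) / s)
      (2 * π * Real.exp (-π * s ^ 2) + Real.exp (-π * s ^ 2) / s ^ 2) s := by
    intro s hs
    have hs0 : s ≠ 0 := (ha.trans_le hs).ne'
    have h1 : HasDerivAt (fun s : ℝ => -Real.exp (-π * s ^ 2))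
        (-(Real.exp (-π * s ^ 2) * (-π * (2 * s)))) s := by
      have : HasDerivAt (fun s : ℝ => -π * s ^ 2) (-π * (2 * s)) s := by
        simpa using ((hasDerivAt_pow 2 s).const_mul (-π))
      exact (this.exp).neg
    have h2 : HasDerivAt (fun s : ℝ => -Real.exp (-π * s ^ 2) / s) _ s := h1.div (hasDerivAt_id s) hs0
    convert h2 using 1
    field_simp
    ring
  have htend : Tendsto (fun s : ℝ => -Real.exp (-π * s ^ 2) / s) atTop (𝓝 0) := by
    have h1 : Tendsto (fun s : ℝ => -π * s ^ 2) atTop atBot := by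
      have := (tendsto_pow_atTop (two_ne_zero)).const_mul_atTop (show (0:ℝ) < π from pi_pos)
      simpa [neg_mul] using (tendsto_neg_atBot_iff.mpr this)
    have h2 : Tendsto (fun s : ℝ => Real.exp (-π * s ^ 2)) atTop (𝓝 0) :=
      Real.tendsto_exp_atBot.comp h1
    have h3 : Tendsto (fun s : ℝ => (s:ℝ)⁻¹) atTop (𝓝 0) := tendsto_inv_atTop_zero
    have := (h2.mul h3).neg
    simpa [div_eq_mul_inv, neg_mul] using this
  have hint : IntegrableOn (fun s : ℝ =>
      2 * π * Real.exp (-π * s ^ 2) + Real.exp (-π * s ^ 2) / s ^ 2) (Set.Ioi a) :=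
    ((hInt1 a).const_mul _).add (hInt2 ha)
  have key := integral_Ioi_of_hasDerivAt_of_tendsto' hderiv hint htend
  rw [integral_add ((hInt1 a).const_mul _) (hInt2 ha)] at key
  rw [MeasureTheory.integral_const_mul] at key
  have : -(-Real.exp (-π * a ^ 2) / a) = Real.exp (-π * a ^ 2) / a := by ring
  linarith [key]

lemma subst {a : ℝ} (ha : 0 < a) :
    ∫ u in Set.Ioi (1:ℝ), u ^ (-(3:ℝ)/2) * Real.exp (-π * a ^ 2 * u)
      = 2 * a * ∫ s in Set.Ioi a, Real.exp (-π * s ^ 2) / s ^ 2 := by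
  set f : ℝ → ℝ := fun u => a * Real.sqrt u with hf
  have himg : f '' Set.Ioi (1:ℝ) = Set.Ioi a := by
    ext y
    constructor
    · rintro ⟨u, hu, rfl⟩
      have hu1 : (1:ℝ) < u := hu
      have : (1:ℝ) < Real.sqrt u := by
        rw [show (1:ℝ) = Real.sqrt 1 from (Real.sqrt_one).symm]
        exact Real.sqrt_lt_sqrt zero_le_one hu1
      simpa [hf] using by nlinarith
    · intro hy
      have hy' : a < y := hy
      have hy0 : 0 < y := ha.trans hy'
      refine ⟨(y / a) ^ 2, ?_, ?_⟩
      · have : (1:ℝ) < y / a := (one_lt_div ha).mpr hy'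
        simpa using one_lt_pow₀ this two_ne_zero
      · have : Real.sqrt ((y / a) ^ 2) = y / a := Real.sqrt_sq (by positivity)
        simp [hf, this]
        field_simp
  have hderiv : ∀ u ∈ Set.Ioi (1:ℝ),
      HasDerivWithinAt f (a * (1 / (2 * Real.sqrt u))) (Set.Ioi (1:ℝ)) u := by
    intro u hu
    have hu1 : (1:ℝ) < u := hu
    have : HasDerivAt Real.sqrt (1 / (2 * Real.sqrt u)) u :=
      Real.hasDerivAt_sqrt (by linarith : (0:ℝ) < u).ne'
    exact ((this.const_mul a).hasDerivWithinAt)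
  have hinj : Set.InjOn f (Set.Ioi (1:ℝ)) := by
    intro u hu v hv h
    have hu1 : (1:ℝ) < u := hu
    have hv1 : (1:ℝ) < v := hv
    have hu0 : (0:ℝ) ≤ u := by linarith
    have hv0 : (0:ℝ) ≤ v := by linarith
    have : Real.sqrt u = Real.sqrt v := by
      have := mul_left_cancel₀ ha.ne' h
      exact this
    calc u = Real.sqrt u ^ 2 := (Real.sq_sqrt hu0).symm
    _ = Real.sqrt v ^ 2 := by rw [this]
    _ = v := Real.sq_sqrt hv0
  have key := MeasureTheory.integral_image_eq_integral_abs_deriv_smul measurableSet_Ioi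
    hderiv hinj (fun y => Real.exp (-π * y ^ 2) / y ^ 2)
  rw [himg] at key
  have hcongr : ∫ u in Set.Ioi (1:ℝ),
      |a * (1 / (2 * Real.sqrt u))| • (Real.exp (-π * f u ^ 2) / f u ^ 2)
      = ∫ u in Set.Ioi (1:ℝ), (1 / (2 * a)) * (u ^ (-(3:ℝ)/2) * Real.exp (-π * a ^ 2 * u)) := by
    apply MeasureTheory.setIntegral_congr_fun measurableSet_Ioi
    intro u hu
    have hu1 : (1:ℝ) < u := hu
    have hu0 : (0:ℝ) < u := lt_trans one_pos hu1
    have hsq : Real.sqrt u > 0 := Real.sqrt_pos.mpr hu0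
    have hfu2 : f u ^ 2 = a ^ 2 * u := by
      simp only [hf]
      rw [mul_pow, Real.sq_sqrt hu0.le]
    have habs : |a * (1 / (2 * Real.sqrt u))| = a * (1 / (2 * Real.sqrt u)) :=
      abs_of_pos (by positivity)
    have hrpow : u ^ (-(3:ℝ)/2) = 1 / (u * Real.sqrt u) := by
      rw [show (-(3:ℝ)/2) = -(1 + 1/2) by norm_num, Real.rpow_neg hu0.le,
        Real.rpow_add hu0, Real.rpow_one, ← Real.sqrt_eq_rpow]
      rw [one_div]
    dsimp only
    rw [habs, smul_eq_mul, hfu2, hrpow]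
    field_simp
  rw [hcongr, MeasureTheory.integral_const_mul] at key
  rw [key]
  field_simp

lemma gauss_Ioi_zero : ∫ s in Set.Ioi (0:ℝ), Real.exp (-π * s ^ 2) = 1 / 2 := by
  rw [integral_gaussian_Ioi π, div_self pi_ne_zero, Real.sqrt_one]

lemma interval_eq_tail {a : ℝ} (ha : 0 ≤ a) :
    ∫ t in (0:ℝ)..a, Real.exp (-π * t ^ 2)
      = 1 / 2 - ∫ s in Set.Ioi a, Real.exp (-π * s ^ 2) := by
  have hsplit : (∫ s in Set.Ioc (0:ℝ) a, Real.exp (-π * s ^ 2))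
      + ∫ s in Set.Ioi a, Real.exp (-π * s ^ 2)
      = ∫ s in Set.Ioi (0:ℝ), Real.exp (-π * s ^ 2) := by
    rw [← MeasureTheory.setIntegral_union (Set.Ioc_disjoint_Ioi le_rfl) measurableSet_Ioi
      ((hInt1 0).mono_set Set.Ioc_subset_Ioi_self) (hInt1 a), Set.Ioc_union_Ioi_eq_Ioi ha]
  rw [intervalIntegral.integral_of_le ha]
  rw [gauss_Ioi_zero] at hsplit
  linarith

end Helpers


/-- The Gauss error function `E(x) = 2∫₀ˣ e^{−πt²} dt`. -/
noncomputable def gaussE (x : ℝ) : ℝ := 2 * ∫ t in (0:ℝ)..x, Real.exp (-π * t ^ 2)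

/-- `ψ(x) = x·E(x) + (1/(2π))·E'(x)`, where `E'(x) = 2e^{−πx²}`. -/
noncomputable def psiFn (x : ℝ) : ℝ :=
  x * gaussE x + (1 / (2 * π)) * (2 * Real.exp (-π * x ^ 2))

/-- `β(t) = (1/(2π)) ∫₁^∞ u^{−3/2} e^{−πtu} du`. -/
noncomputable def betaFn (t : ℝ) : ℝ :=
  (1 / (2 * π)) * ∫ u in Set.Ioi (1:ℝ), u ^ (-(3:ℝ)/2) * Real.exp (-π * t * u)

open MeasureTheory Set Filter Topology

lemma gaussE_neg (x : ℝ) : gaussE (-x) = -gaussE x := by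
  unfold gaussE
  have : ∫ t in (0:ℝ)..(-x), Real.exp (-π * t ^ 2)
      = -∫ t in (0:ℝ)..x, Real.exp (-π * t ^ 2) := by
    have h := intervalIntegral.integral_comp_neg (a := x) (b := 0)
      (fun t => Real.exp (-π * t ^ 2))
    simp only [neg_zero, neg_neg, neg_sq] at h
    rw [← h, intervalIntegral.integral_symm]
  rw [this]; ring

lemma main_pos {x : ℝ} (hx : 0 < x) : psiFn x = |x| + betaFn (x ^ 2) := by
  unfold psiFn betaFn gaussE
  rw [interval_eq_tail hx.le, subst hx, ibp hx, abs_of_pos hx]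
  have hπ : π ≠ 0 := pi_ne_zero
  field_simp
  ring

/-- `ψ(x) = |x| + β(x²)` for all real `x`. -/
theorem psi_eq_abs_add_beta (x : ℝ) : psiFn x = |x| + betaFn (x ^ 2) := by
  rcases lt_trichotomy x 0 with hx | hx | hx
  · have := main_pos (show 0 < -x by linarith)
    have hpsi : psiFn (-x) = psiFn x := by
      unfold psiFn
      rw [gaussE_neg]
      ring_nf
    rw [hpsi] at this
    rw [this]
    simp [abs_neg]
  · subst hx
    unfold psiFn betaFn gaussE
    have h0 : ∫ u in Set.Ioi (1:ℝ), u ^ (-(3:ℝ)/2) * Real.exp (-π * 0 ^ 2 * u)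
        = ∫ u in Set.Ioi (1:ℝ), u ^ (-(3:ℝ)/2) := by
      apply MeasureTheory.setIntegral_congr_fun measurableSet_Ioi
      intro u hu
      simp
    rw [h0, integral_Ioi_rpow_of_lt (by norm_num) one_pos]
    norm_num
  · exact main_pos hx
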